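/- Let A, B ∈ m ⊂ ℂ[[x,y]] and X = A ∂/∂x + B ∂/∂y. Let n ≥ 1 and y₀(t) = Σ_{i≥n} a_i t^i ∈ ℂ[[t]] with ord_t y₀ ≥ n, and set α(t) = (t^n, y₀(t)). Let x(ε,t) = Σ_{j≥0} (ε^j/j!)·(X^j x)(α(t)) and y(ε,t) = Σ_{j≥0} (ε^j/j!)·(X^j y)(α(t)) in ℂ[[ε]][[t]] be the formal deformation of α by X. Then there exist σ(ε,t) ∈ ℂ[[ε]][[t]] of the form σ = u·t + (terms of order ≥ 2 in t) with u a unit of ℂ[[ε]], and elements ã_i ∈ ℂ[[ε]] for i ≥ n, such that x(ε,t) = σ(ε,t)^n, y(ε,t) = Σ_{i≥n} ã_i(ε)·σ(ε,t)^i, and ã_i(0) = a_i for every i ≥ n; that is, the deformation admits an irreducible Puiseux-type parametrization (t^n, Σ_{i≥n} ã_i(ε) t^i) whose coefficients specialize at ε = 0 to those of α. -/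

import Mathlib

/-!
STATEMENT 1: the formal deformation of a Puiseux parametrization
`α(t) = (t^n, y₀(t))` by a singular formal vector field `X = A ∂/∂x + B ∂/∂y`
admits an irreducible Puiseux-type parametrization: there exist
`σ(ε,t) = u·t + O(t²)` with `u` a unit of `ℂ[[ε]]` and `ã_i ∈ ℂ[[ε]]` (`i ≥ n`)
with `x(ε,t) = σ^n`, `y(ε,t) = Σ_{i≥n} ã_i σ^i` and `ã_i(0) = a_i`.

We model `ℂ[[ε]][[t]]` as `PowerSeries (PowerSeries ℂ)`: the outer variable is
`t` and the coefficients are power series in `ε`.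
-/

open PowerSeries

/-- Substitution of `(x(t), y(t))` (both with zero constant term) into a
two-variable formal power series. -/
noncomputable def substPS (xt yt : PowerSeries ℂ) (f : MvPowerSeries (Fin 2) ℂ) :
    PowerSeries ℂ :=
  PowerSeries.mk fun k =>
    ∑ ij ∈ Finset.range (k + 1) ×ˢ Finset.range (k + 1),
      MvPowerSeries.coeff (R := ℂ) (Finsupp.single 0 ij.1 + Finsupp.single 1 ij.2) f *
        PowerSeries.coeff (R := ℂ) k (xt ^ ij.1 * yt ^ ij.2)

/-- Formal partial derivative of a two-variable power series with respect to the
`i`-th variable. -/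
noncomputable def pderiv2 (i : Fin 2) (f : MvPowerSeries (Fin 2) ℂ) :
    MvPowerSeries (Fin 2) ℂ :=
  fun d => ((d i : ℂ) + 1) * MvPowerSeries.coeff (R := ℂ) (d + Finsupp.single i 1) f

/-- The action of the vector field `X = A ∂/∂x + B ∂/∂y` as a derivation. -/
noncomputable def Dv (A B f : MvPowerSeries (Fin 2) ℂ) : MvPowerSeries (Fin 2) ℂ :=
  A * pderiv2 0 f + B * pderiv2 1 f

/-- The maximal ideal of `ℂ[[x,y]]`: series with zero constant term. -/
noncomputable def mIdeal : Ideal (MvPowerSeries (Fin 2) ℂ) :=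
  RingHom.ker (MvPowerSeries.constantCoeff (σ := Fin 2) (R := ℂ))

/-- The component `Σ_{j≥0} (ε^j/j!)·(X^j g)(α(t)) ∈ ℂ[[ε]][[t]]` of the formal
deformation of `α = (xt, yt)` by `X = A ∂/∂x + B ∂/∂y`: the coefficient of
`ε^j t^k` is `(1/j!)` times the `t^k`-coefficient of `(X^j g)(α(t))`. -/
noncomputable def deformComp (A B g : MvPowerSeries (Fin 2) ℂ)
    (xt yt : PowerSeries ℂ) : PowerSeries (PowerSeries ℂ) :=
  PowerSeries.mk fun k =>
    PowerSeries.mk fun j =>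
      ((j.factorial : ℂ))⁻¹ * PowerSeries.coeff (R := ℂ) k (substPS xt yt ((Dv A B)^[j] g))

/-- `Σ_{i} ã_i(ε)·σ(ε,t)^i ∈ ℂ[[ε]][[t]]`, well defined as soon as `σ` has zero
constant term in `t` (only `i ≤ k` contributes to the coefficient of `t^k`). -/
noncomputable def sumSigma (atil : ℕ → PowerSeries ℂ)
    (σ : PowerSeries (PowerSeries ℂ)) : PowerSeries (PowerSeries ℂ) :=
  PowerSeries.mk fun k =>
    ∑ i ∈ Finset.range (k + 1),
      atil i * PowerSeries.coeff (R := PowerSeries ℂ) k (σ ^ i)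


lemma coeff_mul_eq_zero_low {R : Type*} [CommRing R] {f g : PowerSeries R} {n k : ℕ}
    (hf : ∀ a, a < n → PowerSeries.coeff (R := R) a f = 0) (hk : k < n) :
    PowerSeries.coeff (R := R) k (f * g) = 0 := by
  rw [PowerSeries.coeff_mul]
  refine Finset.sum_eq_zero fun p hp => ?_
  rw [Finset.HasAntidiagonal.mem_antidiagonal] at hp
  rw [hf p.1 (lt_of_le_of_lt (Nat.le.intro hp) hk), zero_mul]

lemma pow_eq_one_imp {p : PowerSeries ℂ} {n : ℕ} (hn : 1 ≤ n)
    (h1 : PowerSeries.constantCoeff (R := ℂ) p = 1) (h : p ^ n = 1) : p = 1 := by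
  have hg : (∑ i ∈ Finset.range n, p ^ i) * (p - 1) = 0 := by
    rw [geom_sum_mul, h, sub_self]
  have hs : (∑ i ∈ Finset.range n, p ^ i) ≠ 0 := by
    intro hc
    have h2 := congrArg (PowerSeries.constantCoeff (R := ℂ)) hc
    rw [map_sum] at h2
    simp only [map_pow, h1, one_pow, Finset.sum_const, Finset.card_range, nsmul_eq_mul,
      mul_one, map_zero] at h2
    exact (Nat.cast_ne_zero.mpr (by omega : n ≠ 0)) h2
  rcases mul_eq_zero.mp hg with h' | h'
  · exact absurd h' hs
  · exact sub_eq_zero.mp h'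


lemma substPS_X0 {xt yt : PowerSeries ℂ} (hx : PowerSeries.coeff (R := ℂ) 0 xt = 0) :
    substPS xt yt (MvPowerSeries.X 0) = xt := by
  ext k
  rw [substPS, PowerSeries.coeff_mk]
  have h0 : ∀ b ∈ Finset.range (k+1) ×ˢ Finset.range (k+1), b ≠ ((1,0) : ℕ × ℕ) →
      MvPowerSeries.coeff (R := ℂ) (Finsupp.single 0 b.1 + Finsupp.single 1 b.2)
        (MvPowerSeries.X (0 : Fin 2)) * PowerSeries.coeff (R := ℂ) k (xt ^ b.1 * yt ^ b.2) = 0 := by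
    intro b _ hne
    have hne' : Finsupp.single (0 : Fin 2) b.1 + Finsupp.single (1 : Fin 2) b.2 ≠
        Finsupp.single (0 : Fin 2) 1 := by
      intro he
      apply hne
      have ha := DFunLike.congr_fun he (0 : Fin 2)
      have hb := DFunLike.congr_fun he (1 : Fin 2)
      simp [Finsupp.single_apply] at ha hb
      exact Prod.ext ha hb
    rw [MvPowerSeries.coeff_X, if_neg hne', zero_mul]
  have hval : MvPowerSeries.coeff (R := ℂ) (Finsupp.single (0:Fin 2) (1:ℕ) + Finsupp.single (1:Fin 2) (0:ℕ))
      (MvPowerSeries.X (0 : Fin 2)) * PowerSeries.coeff (R := ℂ) k (xt ^ 1 * yt ^ 0) =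
      PowerSeries.coeff (R := ℂ) k xt := by
    rw [Finsupp.single_zero, add_zero, MvPowerSeries.coeff_X, if_pos rfl, one_mul,
      pow_one, pow_zero, mul_one]
  have h1 : ((1,0) : ℕ × ℕ) ∉ Finset.range (k+1) ×ˢ Finset.range (k+1) →
      MvPowerSeries.coeff (R := ℂ) (Finsupp.single (0:Fin 2) (1:ℕ) + Finsupp.single (1:Fin 2) (0:ℕ))
        (MvPowerSeries.X (0 : Fin 2)) * PowerSeries.coeff (R := ℂ) k (xt ^ 1 * yt ^ 0) = 0 := by
    intro hnot
    have hk : k = 0 := by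
      by_contra hk
      exact hnot (Finset.mem_product.mpr ⟨Finset.mem_range.mpr (by omega),
        Finset.mem_range.mpr (by omega)⟩)
    subst hk
    rw [hval, hx]
  rw [Finset.sum_eq_single ((1,0) : ℕ × ℕ) h0 h1, hval]

lemma substPS_X1 {xt yt : PowerSeries ℂ} (hy : PowerSeries.coeff (R := ℂ) 0 yt = 0) :
    substPS xt yt (MvPowerSeries.X 1) = yt := by
  ext k
  rw [substPS, PowerSeries.coeff_mk]
  have h0 : ∀ b ∈ Finset.range (k+1) ×ˢ Finset.range (k+1), b ≠ ((0,1) : ℕ × ℕ) →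
      MvPowerSeries.coeff (R := ℂ) (Finsupp.single 0 b.1 + Finsupp.single 1 b.2)
        (MvPowerSeries.X (1 : Fin 2)) * PowerSeries.coeff (R := ℂ) k (xt ^ b.1 * yt ^ b.2) = 0 := by
    intro b _ hne
    have hne' : Finsupp.single (0 : Fin 2) b.1 + Finsupp.single (1 : Fin 2) b.2 ≠
        Finsupp.single (1 : Fin 2) 1 := by
      intro he
      apply hne
      have ha := DFunLike.congr_fun he (0 : Fin 2)
      have hb := DFunLike.congr_fun he (1 : Fin 2)
      simp [Finsupp.single_apply] at ha hb
      exact Prod.ext ha hb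
    rw [MvPowerSeries.coeff_X, if_neg hne', zero_mul]
  have hval : MvPowerSeries.coeff (R := ℂ) (Finsupp.single (0:Fin 2) (0:ℕ) + Finsupp.single (1:Fin 2) (1:ℕ))
      (MvPowerSeries.X (1 : Fin 2)) * PowerSeries.coeff (R := ℂ) k (xt ^ 0 * yt ^ 1) =
      PowerSeries.coeff (R := ℂ) k yt := by
    rw [Finsupp.single_zero, zero_add, MvPowerSeries.coeff_X, if_pos rfl, one_mul,
      pow_one, pow_zero, one_mul]
  have h1 : ((0,1) : ℕ × ℕ) ∉ Finset.range (k+1) ×ˢ Finset.range (k+1) →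
      MvPowerSeries.coeff (R := ℂ) (Finsupp.single (0:Fin 2) (0:ℕ) + Finsupp.single (1:Fin 2) (1:ℕ))
        (MvPowerSeries.X (1 : Fin 2)) * PowerSeries.coeff (R := ℂ) k (xt ^ 0 * yt ^ 1) = 0 := by
    intro hnot
    have hk : k = 0 := by
      by_contra hk
      exact hnot (Finset.mem_product.mpr ⟨Finset.mem_range.mpr (by omega),
        Finset.mem_range.mpr (by omega)⟩)
    subst hk
    rw [hval, hy]
  rw [Finset.sum_eq_single ((0,1) : ℕ × ℕ) h0 h1, hval]

lemma substPS_coeff_eq_zero {xt yt : PowerSeries ℂ} {n : ℕ}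
    (hx : ∀ i, i < n → PowerSeries.coeff (R := ℂ) i xt = 0)
    (hy : ∀ i, i < n → PowerSeries.coeff (R := ℂ) i yt = 0)
    {f : MvPowerSeries (Fin 2) ℂ} (hf : MvPowerSeries.constantCoeff (σ := Fin 2) (R := ℂ) f = 0)
    {k : ℕ} (hk : k < n) : PowerSeries.coeff (R := ℂ) k (substPS xt yt f) = 0 := by
  rw [substPS, PowerSeries.coeff_mk]
  refine Finset.sum_eq_zero fun b _ => ?_
  obtain ⟨i, j⟩ := b
  match i, j with
  | 0, 0 =>
    have : (Finsupp.single (0:Fin 2) (0:ℕ) + Finsupp.single (1:Fin 2) (0:ℕ)) = 0 := by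
      simp
    rw [this]
    simp only [MvPowerSeries.coeff_zero_eq_constantCoeff]
    rw [hf, zero_mul]
  | (i+1), j =>
    have he : xt ^ (i+1) * yt ^ j = xt * (xt ^ i * yt ^ j) := by ring
    rw [he, coeff_mul_eq_zero_low hx hk, mul_zero]
  | 0, (j+1) =>
    have he : xt ^ 0 * yt ^ (j+1) = yt * yt ^ j := by ring
    rw [he, coeff_mul_eq_zero_low hy hk, mul_zero]
noncomputable def rootC {S : Type*} [CommRing S] [Algebra ℚ S] (n : ℕ) (g : PowerSeries S) : ℕ → S
  | 0 => 1
  | (k+1) => algebraMap ℚ S (1/(n:ℚ)) *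
      (PowerSeries.coeff (R := S) (k+1) g - PowerSeries.coeff (R := S) (k+1)
        ((PowerSeries.mk fun i => if _h : i < k+1 then rootC n g i else 0) ^ n))
  termination_by k => k
  decreasing_by exact _h

lemma exists_root {S : Type*} [CommRing S] [Algebra ℚ S] {n : ℕ} (hn : 1 ≤ n)
    {g : PowerSeries S} (hg : PowerSeries.constantCoeff (R := S) g = 1) :
    ∃ h : PowerSeries S, PowerSeries.constantCoeff (R := S) h = 1 ∧ h ^ n = g := by
  obtain ⟨m0, rfl⟩ : ∃ m0, n = m0 + 1 := ⟨n - 1, by omega⟩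
  refine ⟨PowerSeries.mk (rootC (m0+1) g), ?_, ?_⟩
  · rw [← PowerSeries.coeff_zero_eq_constantCoeff_apply, PowerSeries.coeff_mk, rootC]
  · have h0 : PowerSeries.constantCoeff (R := S) (PowerSeries.mk (rootC (m0+1) g)) = 1 := by
      rw [← PowerSeries.coeff_zero_eq_constantCoeff_apply, PowerSeries.coeff_mk, rootC]
    ext k
    match k with
    | 0 =>
      rw [PowerSeries.coeff_zero_eq_constantCoeff_apply, map_pow, h0, one_pow,
        PowerSeries.coeff_zero_eq_constantCoeff_apply, hg]
    | (k+1) =>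
      set h : PowerSeries S := PowerSeries.mk (rootC (m0+1) g) with hh
      set H : PowerSeries S := PowerSeries.mk (fun i => if _h : i < k+1 then rootC (m0+1) g i else 0) with hH
      set d : PowerSeries S := h - H with hd
      have hdlow : ∀ a, a < k+1 → PowerSeries.coeff (R := S) a d = 0 := by
        intro a ha
        rw [hd, map_sub, hh, hH, PowerSeries.coeff_mk, PowerSeries.coeff_mk, dif_pos ha, sub_self]
      have hdtop : PowerSeries.coeff (R := S) (k+1) d = rootC (m0+1) g (k+1) := by
        rw [hd, map_sub, hh, hH, PowerSeries.coeff_mk, PowerSeries.coeff_mk,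
          dif_neg (lt_irrefl (k+1)), sub_zero]
      have hH0 : PowerSeries.constantCoeff (R := S) H = 1 := by
        rw [hH, ← PowerSeries.coeff_zero_eq_constantCoeff_apply, PowerSeries.coeff_mk,
          dif_pos (Nat.succ_pos k), rootC]
      have hsq : ∀ a, a < k+2 → PowerSeries.coeff (R := S) a (d * d) = 0 := by
        intro a ha
        rw [PowerSeries.coeff_mul]
        refine Finset.sum_eq_zero fun p hp => ?_
        rw [Finset.HasAntidiagonal.mem_antidiagonal] at hp
        by_cases h1 : p.1 < k+1
        · rw [hdlow _ h1, zero_mul]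
        · rw [hdlow p.2 (by omega), mul_zero]
      have hexp : h = d + H := by rw [hd]; ring
      rw [hexp, add_pow, map_sum, Finset.sum_range_succ', Finset.sum_range_succ']
      have hz : ∀ i ∈ Finset.range m0,
          PowerSeries.coeff (R := S) (k+1) (d ^ (i+1+1) * H ^ (m0+1-(i+1+1)) * ((m0+1).choose (i+1+1) : PowerSeries S)) = 0 := by
        intro i _
        have he : d ^ (i+1+1) * H ^ (m0+1-(i+1+1)) * ((m0+1).choose (i+1+1) : PowerSeries S)
            = (d * d) * (d ^ i * H ^ (m0+1-(i+1+1)) * ((m0+1).choose (i+1+1) : PowerSeries S)) := by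
          ring
        rw [he]
        exact coeff_mul_eq_zero_low hsq (by omega)
      rw [Finset.sum_eq_zero hz, zero_add]
      have hd1 : PowerSeries.coeff (R := S) (k+1) (d ^ (0+1) * H ^ (m0+1-(0+1)) * ((m0+1).choose (0+1) : PowerSeries S))
          = rootC (m0+1) g (k+1) * ((m0:S)+1) := by
        have hc : ((m0+1).choose (0+1) : PowerSeries S) = PowerSeries.C (R := S) ((m0:S)+1) := by
          rw [Nat.choose_one_right]
          push_cast
          simp [map_add, map_one]
        rw [hc, PowerSeries.coeff_mul_C, pow_one]
        congr 1
        rw [PowerSeries.coeff_mul]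
        rw [Finset.sum_eq_single ((k+1, 0) : ℕ × ℕ)]
        · rw [hdtop]
          simp [PowerSeries.coeff_zero_eq_constantCoeff_apply, map_pow, hH0]
        · intro p hp hne
          rw [Finset.HasAntidiagonal.mem_antidiagonal] at hp
          by_cases h1 : p.1 < k+1
          · rw [hdlow _ h1, zero_mul]
          · exfalso; apply hne
            have : p.1 = k+1 := by omega
            have h2 : p.2 = 0 := by omega
            exact Prod.ext this h2
        · intro habs
          exact absurd (Finset.HasAntidiagonal.mem_antidiagonal.mpr (by simp)) habs
      rw [hd1]
      have hrec : rootC (m0+1) g (k+1) = algebraMap ℚ S (1/((m0:ℚ)+1)) *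
          (PowerSeries.coeff (R := S) (k+1) g - PowerSeries.coeff (R := S) (k+1) (H ^ (m0+1))) := by
        rw [hH]
        rw [rootC]
        push_cast
        ring_nf
      have hninv : algebraMap ℚ S (1/((m0:ℚ)+1)) * ((m0:S)+1) = 1 := by
        have : ((m0:S)+1) = algebraMap ℚ S ((m0:ℚ)+1) := by push_cast; simp
        rw [this, ← map_mul, one_div, inv_mul_cancel₀ (by positivity), map_one]
      have hsimp : PowerSeries.coeff (R := S) (k+1) (d ^ 0 * H ^ (m0 + 1 - 0) * (((m0+1).choose 0 : ℕ) : PowerSeries S)) = PowerSeries.coeff (R := S) (k+1) (H ^ (m0+1)) := by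
        simp
      rw [hsimp, hrec]
      linear_combination (PowerSeries.coeff (R := S) (k+1) g - PowerSeries.coeff (R := S) (k+1) (H^(m0+1))) * hninv

noncomputable def atilF (u : PowerSeries ℂ) (σ y : PowerSeries (PowerSeries ℂ)) : ℕ → PowerSeries ℂ
  | k => u ^ k * (PowerSeries.coeff k y -
      ∑ i ∈ (Finset.range k).attach, atilF u σ y i * PowerSeries.coeff k (σ ^ (i:ℕ)))
  termination_by k => k
  decreasing_by exact Finset.mem_range.mp i.2

lemma atilF_eq (u : PowerSeries ℂ) (σ y : PowerSeries (PowerSeries ℂ)) (k : ℕ) :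
    atilF u σ y k = u ^ k * (PowerSeries.coeff k y -
      ∑ i ∈ Finset.range k, atilF u σ y i * PowerSeries.coeff k (σ ^ i)) := by
  rw [atilF, ← Finset.sum_attach (Finset.range k)
    (fun i => atilF u σ y i * PowerSeries.coeff k (σ ^ i))]

theorem deformation_admits_puiseux_parametrization
    (A B : MvPowerSeries (Fin 2) ℂ) (hA : A ∈ mIdeal) (hB : B ∈ mIdeal)
    (n : ℕ) (hn : 1 ≤ n)
    (y0 : PowerSeries ℂ) (hy0 : ∀ i < n, PowerSeries.coeff (R := ℂ) i y0 = 0) :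
    ∃ (σ : PowerSeries (PowerSeries ℂ)) (atil : ℕ → PowerSeries ℂ),
      PowerSeries.coeff (R := (PowerSeries ℂ)) 0 σ = 0 ∧
      IsUnit (PowerSeries.coeff (R := (PowerSeries ℂ)) 1 σ) ∧
      deformComp A B (MvPowerSeries.X 0) (PowerSeries.X ^ n) y0 = σ ^ n ∧
      deformComp A B (MvPowerSeries.X 1) (PowerSeries.X ^ n) y0 = sumSigma atil σ ∧
      (∀ i < n, atil i = 0) ∧
      (∀ i, PowerSeries.constantCoeff (R := ℂ) (atil i) = PowerSeries.coeff (R := ℂ) i y0) := by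
  set xt : PowerSeries ℂ := PowerSeries.X ^ n with hxt_def
  have hxt0 : ∀ i, i < n → PowerSeries.coeff (R := ℂ) i xt = 0 := fun i hi => by
    rw [hxt_def, PowerSeries.coeff_X_pow, if_neg (by omega)]
  have hy0' : ∀ i, i < n → PowerSeries.coeff (R := ℂ) i y0 = 0 := fun i hi => hy0 i hi
  have hA0 : MvPowerSeries.constantCoeff (σ := Fin 2) (R := ℂ) A = 0 := by
    have := hA; rw [mIdeal, RingHom.mem_ker] at this; exact this
  have hB0 : MvPowerSeries.constantCoeff (σ := Fin 2) (R := ℂ) B = 0 := by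
    have := hB; rw [mIdeal, RingHom.mem_ker] at this; exact this
  have hDv : ∀ f, MvPowerSeries.constantCoeff (σ := Fin 2) (R := ℂ) (Dv A B f) = 0 := by
    intro f
    rw [Dv, map_add, map_mul, map_mul, hA0, hB0, zero_mul, zero_mul, add_zero]
  have hiter : ∀ (g : MvPowerSeries (Fin 2) ℂ) (j : ℕ),
      MvPowerSeries.constantCoeff (σ := Fin 2) (R := ℂ) ((Dv A B)^[j+1] g) = 0 := by
    intro g j; rw [Function.iterate_succ_apply']; exact hDv _
  set Xc := deformComp A B (MvPowerSeries.X 0) xt y0 with hXc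
  set Yc := deformComp A B (MvPowerSeries.X 1) xt y0 with hYc
  have hcoeffD : ∀ (g : MvPowerSeries (Fin 2) ℂ) (k : ℕ),
      PowerSeries.coeff (R := (PowerSeries ℂ)) k (deformComp A B g xt y0) =
      PowerSeries.mk (fun j => ((j.factorial : ℂ))⁻¹ *
        PowerSeries.coeff (R := ℂ) k (substPS xt y0 ((Dv A B)^[j] g))) := by
    intro g k
    rw [deformComp, PowerSeries.coeff_mk]
  have hx00 : PowerSeries.coeff (R := ℂ) 0 xt = 0 := hxt0 0 (by omega)
  have hy00 : PowerSeries.coeff (R := ℂ) 0 y0 = 0 := hy0 0 (by omega)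
  have hxlow : ∀ k, k < n → PowerSeries.coeff (R := (PowerSeries ℂ)) k Xc = 0 := by
    intro k hk
    rw [hXc, hcoeffD]
    ext j
    rw [PowerSeries.coeff_mk, map_zero]
    cases j with
    | zero =>
      rw [Function.iterate_zero_apply, substPS_X0 hx00, hxt0 k hk, mul_zero]
    | succ j =>
      rw [substPS_coeff_eq_zero hxt0 hy0' (hiter _ j) hk, mul_zero]
  have hylow : ∀ k, k < n → PowerSeries.coeff (R := (PowerSeries ℂ)) k Yc = 0 := by
    intro k hk
    rw [hYc, hcoeffD]
    ext j
    rw [PowerSeries.coeff_mk, map_zero]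
    cases j with
    | zero =>
      rw [Function.iterate_zero_apply, substPS_X1 hy00, hy0' k hk, mul_zero]
    | succ j =>
      rw [substPS_coeff_eq_zero hxt0 hy0' (hiter _ j) hk, mul_zero]
  have hpi : ∀ (g : MvPowerSeries (Fin 2) ℂ) (k : ℕ),
      PowerSeries.constantCoeff (R := ℂ) (PowerSeries.coeff (R := (PowerSeries ℂ)) k (deformComp A B g xt y0)) =
      PowerSeries.coeff (R := ℂ) k (substPS xt y0 g) := by
    intro g k
    rw [hcoeffD, ← PowerSeries.coeff_zero_eq_constantCoeff_apply, PowerSeries.coeff_mk,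
      Function.iterate_zero_apply, Nat.factorial_zero, Nat.cast_one, inv_one, one_mul]
  have hmapX : PowerSeries.map (PowerSeries.constantCoeff (R := ℂ)) Xc = xt := by
    ext k
    rw [PowerSeries.coeff_map, hXc, hpi, substPS_X0 hx00]
  have hmapY : PowerSeries.map (PowerSeries.constantCoeff (R := ℂ)) Yc = y0 := by
    ext k
    rw [PowerSeries.coeff_map, hYc, hpi, substPS_X1 hy00]
  -- factor out X^n from Xc
  obtain ⟨v, hv⟩ := (PowerSeries.X_pow_dvd_iff).mpr hxlow
  set c : PowerSeries ℂ := PowerSeries.constantCoeff (R := (PowerSeries ℂ)) v with hc_def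
  have hcoeffnX : PowerSeries.coeff (R := (PowerSeries ℂ)) n Xc = c := by
    have h1 := PowerSeries.coeff_X_pow_mul v n 0
    rw [zero_add] at h1
    rw [hv, h1, PowerSeries.coeff_zero_eq_constantCoeff_apply, hc_def]
  have hc1 : PowerSeries.constantCoeff (R := ℂ) c = 1 := by
    rw [← hcoeffnX, ← PowerSeries.coeff_map, hmapX, hxt_def, PowerSeries.coeff_X_pow, if_pos rfl]
  obtain ⟨r, hr0, hrn⟩ := exists_root hn hc1
  have hrU : IsUnit r := PowerSeries.isUnit_iff_constantCoeff.mpr (by rw [hr0]; exact isUnit_one)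
  obtain ⟨ru, hru⟩ := hrU
  set winv : PowerSeries ℂ := ((ru⁻¹ : (PowerSeries ℂ)ˣ) : PowerSeries ℂ) with hwinv_def
  have hur : r * winv = 1 := by rw [← hru, hwinv_def]; exact ru.mul_inv
  set w : PowerSeries (PowerSeries ℂ) := PowerSeries.C (R := (PowerSeries ℂ)) (winv ^ n) * v with hw_def
  have hW1 : PowerSeries.constantCoeff (R := (PowerSeries ℂ)) w = 1 := by
    rw [hw_def, map_mul, PowerSeries.constantCoeff_C, ← hc_def, ← hrn, ← mul_pow,
      mul_comm winv r, hur, one_pow]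
  obtain ⟨h, hh0, hhn⟩ := exists_root hn hW1
  set q : PowerSeries (PowerSeries ℂ) := PowerSeries.C (R := (PowerSeries ℂ)) r * h with hq_def
  set σ : PowerSeries (PowerSeries ℂ) := PowerSeries.X * q with hσ_def
  have hq0 : PowerSeries.constantCoeff (R := (PowerSeries ℂ)) q = r := by
    rw [hq_def, map_mul, PowerSeries.constantCoeff_C, hh0, mul_one]
  have hσ0 : PowerSeries.coeff (R := (PowerSeries ℂ)) 0 σ = 0 := by
    rw [hσ_def, PowerSeries.coeff_zero_eq_constantCoeff_apply, map_mul,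
      PowerSeries.constantCoeff_X, zero_mul]
  have hσ1 : PowerSeries.coeff (R := (PowerSeries ℂ)) 1 σ = r := by
    have h1 := PowerSeries.coeff_X_pow_mul q 1 0
    rw [zero_add, pow_one] at h1
    rw [hσ_def, h1, PowerSeries.coeff_zero_eq_constantCoeff_apply, hq0]
  have hqn : q ^ n = PowerSeries.C (R := (PowerSeries ℂ)) (r ^ n) * w := by
    rw [hq_def, mul_pow, ← map_pow, hhn]
  have hσn : σ ^ n = Xc := by
    rw [hσ_def, mul_pow, hqn, hw_def, hrn, hv]
    rw [← mul_assoc, ← mul_assoc, mul_assoc (PowerSeries.X ^ n), ← map_mul]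
    rw [← hrn, ← mul_pow, hur, one_pow, map_one, mul_one]
  have hσpow : ∀ i : ℕ, σ ^ i = PowerSeries.X ^ i * q ^ i := fun i => by
    rw [hσ_def, mul_pow]
  have hσk : ∀ k : ℕ, PowerSeries.coeff (R := (PowerSeries ℂ)) k (σ ^ k) = r ^ k := by
    intro k
    have h1 := PowerSeries.coeff_X_pow_mul (q ^ k) k 0
    rw [zero_add] at h1
    rw [hσpow, h1, PowerSeries.coeff_zero_eq_constantCoeff_apply, map_pow, hq0]
  have hPsigma : PowerSeries.map (PowerSeries.constantCoeff (R := ℂ)) σ = PowerSeries.X := by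
    have h1 : PowerSeries.map (PowerSeries.constantCoeff (R := ℂ)) σ =
        PowerSeries.X * PowerSeries.map (PowerSeries.constantCoeff (R := ℂ)) q := by
      rw [hσ_def, map_mul, PowerSeries.map_X]
    have h2 : (PowerSeries.X * PowerSeries.map (PowerSeries.constantCoeff (R := ℂ)) q) ^ n =
        PowerSeries.X ^ n := by
      rw [← h1, ← map_pow, hσn, hmapX, hxt_def]
    rw [mul_pow] at h2
    have h3 : (PowerSeries.map (PowerSeries.constantCoeff (R := ℂ)) q) ^ n = 1 :=
      mul_left_cancel₀ (pow_ne_zero n PowerSeries.X_ne_zero) (h2.trans (mul_one _).symm)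
    have h4 : PowerSeries.constantCoeff (R := ℂ) (PowerSeries.map (PowerSeries.constantCoeff (R := ℂ)) q) = 1 := by
      rw [← PowerSeries.coeff_zero_eq_constantCoeff_apply, PowerSeries.coeff_map,
        PowerSeries.coeff_zero_eq_constantCoeff_apply, hq0, hr0]
    have h5 := pow_eq_one_imp hn h4 h3
    rw [h1, h5, mul_one]
  set atil : ℕ → PowerSeries ℂ := atilF winv σ Yc with hatil_def
  have hatil_eq : ∀ k, atil k = winv ^ k * (PowerSeries.coeff (R := (PowerSeries ℂ)) k Yc -
      ∑ i ∈ Finset.range k, atil i * PowerSeries.coeff (R := (PowerSeries ℂ)) k (σ ^ i)) := by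
    intro k
    rw [hatil_def]
    exact atilF_eq winv σ Yc k
  have hwr : ∀ k : ℕ, winv ^ k * r ^ k = 1 := fun k => by
    rw [← mul_pow, mul_comm winv r, hur, one_pow]
  have hY : Yc = sumSigma atil σ := by
    refine PowerSeries.ext fun k => ?_
    rw [sumSigma, PowerSeries.coeff_mk, Finset.sum_range_succ, hσk, hatil_eq k]
    linear_combination ((∑ i ∈ Finset.range k, atil i * PowerSeries.coeff (R := (PowerSeries ℂ)) k (σ ^ i)) -
      PowerSeries.coeff (R := (PowerSeries ℂ)) k Yc) * (hwr k)
  have hzero : ∀ i, i < n → atil i = 0 := by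
    intro i
    induction i using Nat.strong_induction_on with
    | _ i ih =>
      intro hi
      rw [hatil_eq i, hylow i hi, Finset.sum_eq_zero (fun j hj => by
        rw [ih j (Finset.mem_range.mp hj) (lt_trans (Finset.mem_range.mp hj) hi), zero_mul])]
      simp
  have hspec : ∀ i, PowerSeries.constantCoeff (R := ℂ) (atil i) = PowerSeries.coeff (R := ℂ) i y0 := by
    intro i
    have hπw : PowerSeries.constantCoeff (R := ℂ) winv = 1 := by
      have h1 := congrArg (PowerSeries.constantCoeff (R := ℂ)) hur
      rw [map_mul, hr0, one_mul, map_one] at h1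
      exact h1
    have hπY : PowerSeries.constantCoeff (R := ℂ) (PowerSeries.coeff (R := (PowerSeries ℂ)) i Yc) =
        PowerSeries.coeff (R := ℂ) i y0 := by
      rw [← PowerSeries.coeff_map, hmapY]
    have hπσ : ∀ j, j < i →
        PowerSeries.constantCoeff (R := ℂ) (PowerSeries.coeff (R := (PowerSeries ℂ)) i (σ ^ j)) = 0 := by
      intro j hj
      rw [← PowerSeries.coeff_map, map_pow, hPsigma, PowerSeries.coeff_X_pow, if_neg (by omega)]
    rw [hatil_eq i, map_mul, map_pow, map_sub, map_sum, hπw, one_pow, one_mul, hπY,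
      Finset.sum_eq_zero (fun j hj => by
        rw [map_mul, hπσ j (Finset.mem_range.mp hj), mul_zero]), sub_zero]
  exact ⟨σ, atil, hσ0, (by rw [hσ1]; exact ⟨ru, hru⟩), hσn.symm, hY, hzero, hspec⟩
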